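/- Let (r(t), p_r(t)) be a maximal solution of the reduced logarithm equations dr/dt = p_r, dp_r/dt = c^2/r^3 − 1/r with finite forward maximal time t* < ∞. Then lim_{t → t*} r(t) = 0 (the singularity is a collision). -/

import Mathlib

open Filter Set

set_option maxHeartbeats 1000000

/-- A function on `[t₁, T)` whose derivative is bounded has a limit from the left at `T`. -/
lemma exists_tendsto_left_of_deriv_bound (F G : ℝ → ℝ) (t₁ T K : ℝ) (h1 : t₁ < T) (hK : 0 ≤ K)
    (hder : ∀ s ∈ Ico t₁ T, HasDerivAt F (G s) s) (hbd : ∀ s ∈ Ico t₁ T, |G s| ≤ K) :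
    ∃ l, Tendsto F (nhdsWithin T (Iio T)) (nhds l) := by
  have hlip : ∀ u ∈ Ico t₁ T, ∀ v ∈ Ico t₁ T, |F u - F v| ≤ K * |u - v| := by
    intro u hu v hv
    have := Convex.norm_image_sub_le_of_norm_hasDerivWithin_le
      (f := F) (f' := G) (s := Ico t₁ T)
      (fun x hx => (hder x hx).hasDerivWithinAt)
      (fun x hx => by rw [Real.norm_eq_abs]; exact hbd x hx) (convex_Ico _ _) hv hu
    simpa [Real.norm_eq_abs] using this
  have hc : Cauchy (map F (nhdsWithin T (Iio T))) := by
    rw [Metric.cauchy_iff]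
    constructor
    · exact map_neBot
    · intro ε hε
      have hK1 : (0:ℝ) < K + 1 := by linarith
      set a := max t₁ (T - ε / (K + 1)) with ha
      have hp0 : 0 < ε / (K + 1) := by positivity
      have haT : a < T := max_lt h1 (by linarith)
      refine ⟨F '' Ioo a T, image_mem_map (Ioo_mem_nhdsLT haT), ?_⟩
      rintro x ⟨u, hu, rfl⟩ y ⟨v, hv, rfl⟩
      have hu' : u ∈ Ico t₁ T := ⟨le_of_lt (lt_of_le_of_lt (le_max_left _ _) hu.1), hu.2⟩
      have hv' : v ∈ Ico t₁ T := ⟨le_of_lt (lt_of_le_of_lt (le_max_left _ _) hv.1), hv.2⟩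
      have haa : T - ε / (K+1) ≤ a := le_max_right _ _
      have huv : |u - v| ≤ ε / (K + 1) := by
        rw [abs_le]
        constructor <;> [skip; skip] <;>
        · have h1 := hu.1; have h2 := hu.2; have h3 := hv.1; have h4 := hv.2
          linarith
      rw [Real.dist_eq]
      calc |F u - F v| ≤ K * |u - v| := hlip u hu' v hv'
        _ ≤ K * (ε / (K+1)) := by
            exact mul_le_mul_of_nonneg_left huv hK
        _ < ε := by
            rw [mul_div_assoc']
            rw [div_lt_iff₀ hK1]
            nlinarith
  obtain ⟨l, hl⟩ := CompleteSpace.complete hc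
  exact ⟨l, hl⟩

/-- Left-sided derivative at the endpoint from convergence of the derivative. -/
lemma hasDerivWithinAt_Iic_of_tendsto {F G : ℝ → ℝ} {T t₁ l : ℝ} (h1 : t₁ < T)
    (hder : ∀ s ∈ Ioo t₁ T, HasDerivAt F (G s) s)
    (hcont : ContinuousWithinAt F (Iic T) T)
    (hG : Tendsto G (nhdsWithin T (Iio T)) (nhds l)) :
    HasDerivWithinAt F l (Iic T) T := by
  rw [hasDerivWithinAt_iff_tendsto_slope, Iic_diff_right]
  rw [Metric.tendsto_nhdsWithin_nhds] at hG ⊢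
  intro ε hε
  obtain ⟨δ, hδ, hδ'⟩ := hG ε hε
  refine ⟨min δ (T - t₁), lt_min hδ (by linarith), fun x hx hdist => ?_⟩
  have hxT : x < T := hx
  rw [Real.dist_eq] at hdist
  have habs : T - x ≤ |x - T| := by rw [abs_sub_comm]; exact le_abs_self _
  have hxt₁ : t₁ < x := by
    have := lt_of_le_of_lt habs hdist
    have h2 : T - x < T - t₁ := lt_of_lt_of_le this (min_le_right _ _)
    linarith
  have hcont' : ContinuousOn F (Icc x T) := by
    intro y hy
    rcases eq_or_lt_of_le hy.2 with rfl | hyT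
    · exact hcont.mono Icc_subset_Iic_self
    · exact ((hder y ⟨lt_of_lt_of_le hxt₁ hy.1, hyT⟩).continuousAt).continuousWithinAt
  obtain ⟨ξ, hξmem, hξ⟩ := exists_hasDerivAt_eq_slope F G hxT hcont'
    (fun y hy => hder y ⟨hxt₁.trans hy.1, hy.2⟩)
  have hslope : slope F T x = G ξ := by
    rw [slope_def_field, hξ]
    have hne : x - T ≠ 0 := sub_ne_zero.mpr (ne_of_lt hxT)
    have hne' : T - x ≠ 0 := sub_ne_zero.mpr (ne_of_gt hxT)
    field_simp
    ring
  rw [hslope]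
  apply hδ' hξmem.2
  rw [Real.dist_eq]
  have : T - ξ < T - x := by have := hξmem.1; linarith
  rw [abs_sub_comm, abs_of_pos (by linarith [hξmem.2] : (0:ℝ) < T - ξ)]
  calc T - ξ < T - x := this
    _ ≤ |x - T| := habs
    _ < min δ (T - t₁) := hdist
    _ ≤ δ := min_le_left _ _

/-- Continuity from the left at the gluing point. -/
lemma continuousWithinAt_Iic_glue {F r : ℝ → ℝ} {T l : ℝ}
    (hFr : ∀ t, t < T → F t = r t) (hFT : F T = l)
    (hr : Tendsto r (nhdsWithin T (Iio T)) (nhds l)) :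
    ContinuousWithinAt F (Iic T) T := by
  rw [ContinuousWithinAt, hFT, ← Iio_union_right, nhdsWithin_union, tendsto_sup]
  constructor
  · exact hr.congr' (eventually_mem_nhdsWithin.mono fun t ht => (hFr t ht).symm)
  · rw [nhdsWithin_singleton]
    exact hFT ▸ tendsto_pure_nhds F T


/-- If a maximal solution of the reduced logarithm equations
`dr/dt = p_r`, `dp_r/dt = c²/r³ − 1/r` has finite forward maximal time `t*`,
then `r(t) → 0` as `t → t*⁻`: the singularity is a collision. -/
theorem singularity_is_collision (c : ℝ) (r p : ℝ → ℝ) (tstar : ℝ)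
    (htpos : 0 < tstar)
    (hsol : ∀ t ∈ Ico (0:ℝ) tstar, 0 < r t ∧
      HasDerivAt r (p t) t ∧
      HasDerivAt p (c ^ 2 / (r t) ^ 3 - 1 / r t) t)
    -- maximality: the solution cannot be extended beyond `t*`
    (hmax : ¬ ∃ (r' p' : ℝ → ℝ) (ε : ℝ), 0 < ε ∧
      (∀ t ∈ Ico (0:ℝ) tstar, r' t = r t ∧ p' t = p t) ∧
      (∀ t ∈ Ico (0:ℝ) (tstar + ε), 0 < r' t ∧
        HasDerivAt r' (p' t) t ∧
        HasDerivAt p' (c ^ 2 / (r' t) ^ 3 - 1 / r' t) t)) :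
    Tendsto r (nhdsWithin tstar (Iio tstar)) (nhds 0) := by
  by_contra hcon
  have hrpos : ∀ t ∈ Ico (0:ℝ) tstar, 0 < r t := fun t ht => (hsol t ht).1
  have hrd : ∀ t ∈ Ico (0:ℝ) tstar, HasDerivAt r (p t) t := fun t ht => (hsol t ht).2.1
  have hpd : ∀ t ∈ Ico (0:ℝ) tstar, HasDerivAt p (c ^ 2 / (r t) ^ 3 - 1 / r t) t :=
    fun t ht => (hsol t ht).2.2
  -- energy conservation
  obtain ⟨H, hHdef⟩ : ∃ H : ℝ, H = p 0 ^ 2 / 2 + c ^ 2 / 2 * ((r 0) ^ 2)⁻¹ + Real.log (r 0) :=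
    ⟨_, rfl⟩
  have hEderiv : ∀ t ∈ Ico (0:ℝ) tstar,
      HasDerivAt (fun s => p s ^ 2 / 2 + c ^ 2 / 2 * ((r s) ^ 2)⁻¹ + Real.log (r s)) 0 t := by
    intro t ht
    have h0 := hrpos t ht
    have hr := hrd t ht
    have hp := hpd t ht
    have h1 : HasDerivAt (fun s => p s ^ 2 / 2)
        ((2 * p t ^ 1 * (c ^ 2 / (r t) ^ 3 - 1 / r t)) / 2) t := (hp.pow 2).div_const 2
    have h2 : HasDerivAt (fun s => ((r s) ^ 2)⁻¹)
        (-(2 * r t ^ 1 * p t) / ((r t) ^ 2) ^ 2) t := (hr.pow 2).inv (pow_ne_zero 2 h0.ne')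
    have h2' := h2.const_mul (c ^ 2 / 2)
    have h3 : HasDerivAt (fun s => Real.log (r s)) ((r t)⁻¹ * p t) t :=
      (Real.hasDerivAt_log h0.ne').comp t hr
    have hsum := (h1.add h2').add h3
    refine hsum.congr_deriv ?_
    have hrne : r t ≠ 0 := h0.ne'
    field_simp
    ring
  have hEconst : ∀ t ∈ Ico (0:ℝ) tstar,
      p t ^ 2 / 2 + c ^ 2 / 2 * ((r t) ^ 2)⁻¹ + Real.log (r t) = H := by
    intro t ht
    rcases eq_or_lt_of_le ht.1 with h0 | h0
    · rw [← h0, hHdef]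
    · have hcont : ContinuousOn (fun s => p s ^ 2 / 2 + c ^ 2 / 2 * ((r s) ^ 2)⁻¹
          + Real.log (r s)) (Icc 0 t) := fun y hy =>
        (hEderiv y ⟨hy.1, lt_of_le_of_lt hy.2 ht.2⟩).continuousAt.continuousWithinAt
      obtain ⟨ξ, _, hξ⟩ := exists_hasDerivAt_eq_slope
        (fun s => p s ^ 2 / 2 + c ^ 2 / 2 * ((r s) ^ 2)⁻¹ + Real.log (r s)) (fun _ => 0)
        h0 hcont (fun y hy => hEderiv y ⟨le_of_lt hy.1, hy.2.trans ht.2⟩)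
      have ht0 : t - 0 ≠ 0 := by simpa using h0.ne'
      rw [eq_comm, div_eq_zero_iff] at hξ
      rcases hξ with hξ | hξ
      · rw [hHdef]; linarith
      · exact absurd hξ ht0
  have hlogle : ∀ t ∈ Ico (0:ℝ) tstar, Real.log (r t) ≤ H := by
    intro t ht
    have h1 := hEconst t ht
    have hA : 0 ≤ p t ^ 2 / 2 := by positivity
    have hB : 0 ≤ c ^ 2 / 2 * ((r t) ^ 2)⁻¹ := by positivity
    linarith
  have hpsq : ∀ t ∈ Ico (0:ℝ) tstar, p t ^ 2 ≤ 2 * (H - Real.log (r t)) := by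
    intro t ht
    have h1 := hEconst t ht
    have hB : 0 ≤ c ^ 2 / 2 * ((r t) ^ 2)⁻¹ := by positivity
    linarith
  -- extract δ from ¬Tendsto
  rw [Metric.tendsto_nhds] at hcon
  push_neg at hcon
  obtain ⟨δ, hδ, hfreq⟩ := hcon
  have hIcoev : ∀ᶠ t in nhdsWithin tstar (Iio tstar), t ∈ Ico (0:ℝ) tstar :=
    mem_of_superset (Ioo_mem_nhdsLT htpos) Ioo_subset_Ico_self
  have hfreqδ : ∃ᶠ t in nhdsWithin tstar (Iio tstar), δ ≤ r t ∧ t ∈ Ico (0:ℝ) tstar := by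
    refine (hfreq.and_eventually hIcoev).mono ?_
    rintro t ⟨h1, h2⟩
    refine ⟨?_, h2⟩
    have hpos := hrpos t h2
    rw [Real.dist_eq, sub_zero, abs_of_pos hpos] at h1
    exact h1
  have hδH : Real.log (δ / 2) ≤ H := by
    obtain ⟨t0, ht0, ht0m⟩ := hfreqδ.exists
    calc Real.log (δ / 2) ≤ Real.log δ := Real.log_le_log (by positivity) (by linarith)
      _ ≤ Real.log (r t0) := Real.log_le_log hδ ht0
      _ ≤ H := hlogle t0 ht0m
  set M := Real.sqrt (2 * (H - Real.log (δ / 2))) with hM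
  have hM0 : 0 ≤ M := Real.sqrt_nonneg _
  clear_value M
  have hpbound : ∀ t ∈ Ico (0:ℝ) tstar, δ / 2 ≤ r t → |p t| ≤ M := by
    intro t ht h2
    have h1 : p t ^ 2 ≤ 2 * (H - Real.log (δ / 2)) := by
      have := Real.log_le_log (by positivity : (0:ℝ) < δ / 2) h2
      have := hpsq t ht
      linarith
    calc |p t| = Real.sqrt (p t ^ 2) := (Real.sqrt_sq_eq_abs _).symm
      _ ≤ M := by rw [hM]; exact Real.sqrt_le_sqrt h1
  by_cases hB : ∃ᶠ t in nhdsWithin tstar (Iio tstar), r t ≤ δ / 2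
  · -- Case B: infinitely many crossings, impossible in finite time
    set L := (δ / 2) / (M + 1) with hL
    have hL0 : 0 < L := by rw [hL]; positivity
    clear_value L
    have step : ∀ s, s ∈ Ico (0:ℝ) tstar → ∃ s', s' ∈ Ico (0:ℝ) tstar ∧ s + L ≤ s' := by
      intro s hs
      obtain ⟨a, ⟨hra, haI⟩, haO⟩ :=
        ((hfreqδ.and_eventually (Ioo_mem_nhdsLT hs.2))).exists
      obtain ⟨b, hrb, hbO⟩ :=
        ((hB.and_eventually (Ioo_mem_nhdsLT haO.2))).exists
      have hab : a < b := hbO.1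
      have hb_lt : b < tstar := hbO.2
      have ha0 : 0 ≤ a := haI.1
      have hsubIco : Icc a b ⊆ Ico (0:ℝ) tstar :=
        fun y hy => ⟨le_trans ha0 hy.1, lt_of_le_of_lt hy.2 hb_lt⟩
      have hrc : ContinuousOn r (Icc a b) :=
        fun y hy => ((hrd y (hsubIco hy)).continuousAt).continuousWithinAt
      set S := Icc a b ∩ r ⁻¹' (Iic (δ / 2)) with hS
      have hSclosed : IsClosed S := hrc.preimage_isClosed_of_isClosed isClosed_Icc isClosed_Iic
      have hSne : S.Nonempty := ⟨b, ⟨hab.le, le_refl b⟩, hrb⟩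
      have hSbdd : BddBelow S := ⟨a, fun x hx => hx.1.1⟩
      set b' := sInf S with hb'
      have hb'S : b' ∈ S := hSclosed.csInf_mem hSne hSbdd
      have hb'mem : b' ∈ Icc a b := hb'S.1
      have hrb' : r b' ≤ δ / 2 := hb'S.2
      have hab' : a < b' := by
        rcases eq_or_lt_of_le hb'mem.1 with h | h
        · exfalso; rw [← h] at hrb'; linarith
        · exact h
      have hlow : ∀ t, a ≤ t → t < b' → δ / 2 < r t := by
        intro t h1 h2
        by_contra hle
        push_neg at hle
        have : t ∈ S := ⟨⟨h1, le_trans h2.le hb'mem.2⟩, hle⟩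
        exact absurd (csInf_le hSbdd this) (not_le.mpr h2)
      set S' := Icc a b' ∩ r ⁻¹' (Ici δ) with hS'
      have hS'closed : IsClosed S' :=
        (hrc.mono (Icc_subset_Icc_right hb'mem.2)).preimage_isClosed_of_isClosed
          isClosed_Icc isClosed_Ici
      have hS'ne : S'.Nonempty := ⟨a, ⟨le_refl a, hab'.le⟩, hra⟩
      have hS'bdd : BddAbove S' := ⟨b', fun x hx => hx.1.2⟩
      set a' := sSup S' with ha'
      have ha'S : a' ∈ S' := hS'closed.csSup_mem hS'ne hS'bdd
      have ha'mem : a' ∈ Icc a b' := ha'S.1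
      have hra' : δ ≤ r a' := ha'S.2
      have ha'b' : a' < b' := by
        rcases eq_or_lt_of_le ha'mem.2 with h | h
        · exfalso; rw [h] at hra'; linarith
        · exact h
      have hmem' : Icc a' b' ⊆ Ico (0:ℝ) tstar := fun y hy =>
        hsubIco ⟨le_trans ha'mem.1 hy.1, le_trans hy.2 hb'mem.2⟩
      obtain ⟨ξ, hξmem, hξ⟩ := exists_hasDerivAt_eq_slope r p ha'b'
        (fun y hy => ((hrd y (hmem' hy)).continuousAt).continuousWithinAt)
        (fun y hy => hrd y (hmem' (Ioo_subset_Icc_self hy)))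
      have hrξ : δ / 2 ≤ r ξ :=
        (hlow ξ (le_trans ha'mem.1 hξmem.1.le) hξmem.2).le
      have hpξ : |p ξ| ≤ M := hpbound ξ (hmem' (Ioo_subset_Icc_self hξmem)) hrξ
      have hbane : b' - a' ≠ 0 := sub_ne_zero.mpr ha'b'.ne'
      have hmul : p ξ * (b' - a') = r b' - r a' := by
        field_simp at hξ
        linarith
      have hprod : 0 ≤ (M - (-(p ξ))) * (b' - a') :=
        mul_nonneg (by have := neg_le_abs (p ξ); linarith) (le_of_lt (sub_pos.mpr ha'b'))
      have key : δ / 2 ≤ M * (b' - a') := by nlinarith [hprod, hmul, hrb', hra']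
      have hLle : L ≤ b' - a' := by
        rw [hL, div_le_iff₀ (by positivity : (0:ℝ) < M + 1)]
        nlinarith [key, sub_pos.mpr ha'b']
      refine ⟨b', ⟨?_, lt_of_le_of_lt hb'mem.2 hb_lt⟩, ?_⟩
      · have := haO.1; linarith [ha'mem.1, hs.1]
      · have hsa : s < a := haO.1
        have := ha'mem.1
        linarith
    have iter : ∀ n : ℕ, ∃ s, s ∈ Ico (0:ℝ) tstar ∧ (n : ℝ) * L ≤ s := by
      intro n
      induction n with
      | zero => exact ⟨0, ⟨le_refl 0, htpos⟩, by simp⟩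
      | succ k ih =>
        obtain ⟨s, hs, hks⟩ := ih
        obtain ⟨s', hs', hss'⟩ := step s hs
        exact ⟨s', hs', by push_cast; linarith⟩
    obtain ⟨n, hn⟩ := exists_nat_gt (tstar / L)
    obtain ⟨s, hs, hns⟩ := iter n
    rw [div_lt_iff₀ hL0] at hn
    have := hs.2
    linarith
  · -- Case A: `r` is eventually bounded below; the solution extends, contradicting `hmax`
    rw [Filter.not_frequently] at hB
    obtain ⟨a₀, ha₀lt, hsub⟩ := mem_nhdsLT_iff_exists_Ioo_subset'
      (show tstar - 1 < tstar by linarith) |>.mp hB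
    set t₁ := max ((a₀ + tstar) / 2) (tstar / 2) with ht₁def
    have ht₁lt : t₁ < tstar := by
      apply max_lt
      · have := ha₀lt; simp only [mem_Iio] at this; linarith
      · linarith
    have ha₀t₁ : a₀ < t₁ := by
      have := ha₀lt; simp only [mem_Iio] at this
      have h1 : a₀ < (a₀ + tstar) / 2 := by linarith
      exact lt_of_lt_of_le h1 (le_max_left _ _)
    have ht₁0 : 0 < t₁ := lt_of_lt_of_le (by linarith : (0:ℝ) < tstar / 2) (le_max_right _ _)
    clear_value t₁
    have hlowA : ∀ t, t₁ ≤ t → t < tstar → δ / 2 < r t := by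
      intro t h1 h2
      have hmem : t ∈ Ioo a₀ tstar := ⟨lt_of_lt_of_le ha₀t₁ h1, h2⟩
      have := hsub hmem
      simp only [mem_setOf_eq] at this
      exact not_le.mp this
    have hIsub : Ico t₁ tstar ⊆ Ico (0:ℝ) tstar := fun y hy => ⟨le_trans ht₁0.le hy.1, hy.2⟩
    have hpb : ∀ s ∈ Ico t₁ tstar, |p s| ≤ M :=
      fun s hsm => hpbound s (hIsub hsm) (hlowA s hsm.1 hsm.2).le
    have hδ2 : (0:ℝ) < δ / 2 := by linarith
    set M₂ := c ^ 2 / (δ / 2) ^ 3 + 1 / (δ / 2) with hM₂def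
    have hM₂0 : 0 ≤ M₂ := by rw [hM₂def]; positivity
    have hM₂ : ∀ s ∈ Ico t₁ tstar, |c ^ 2 / (r s) ^ 3 - 1 / r s| ≤ M₂ := by
      intro s hsm
      have h1 : δ / 2 ≤ r s := (hlowA s hsm.1 hsm.2).le
      have h2 : 0 < r s := lt_of_lt_of_le hδ2 h1
      have e1 : c ^ 2 / (r s) ^ 3 ≤ c ^ 2 / (δ / 2) ^ 3 := by gcongr
      have e2 : 1 / r s ≤ 1 / (δ / 2) := by gcongr
      have e3 : 0 ≤ c ^ 2 / (r s) ^ 3 := by positivity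
      have e4 : 0 ≤ 1 / r s := by positivity
      rw [hM₂def, abs_le]
      constructor <;> linarith
    clear_value M₂
    -- limits of r and p at tstar from the left
    obtain ⟨rstar, hrstar⟩ := exists_tendsto_left_of_deriv_bound r p t₁ tstar M ht₁lt hM0
      (fun s hsm => hrd s (hIsub hsm)) hpb
    obtain ⟨pstar, hpstar⟩ := exists_tendsto_left_of_deriv_bound p
      (fun s => c ^ 2 / (r s) ^ 3 - 1 / r s) t₁ tstar M₂ ht₁lt hM₂0
      (fun s hsm => hpd s (hIsub hsm)) hM₂
    have hrstar_ge : δ / 2 ≤ rstar := by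
      refine ge_of_tendsto hrstar ?_
      refine mem_of_superset (Ioo_mem_nhdsLT ht₁lt) fun y hy => ?_
      exact (hlowA y hy.1.le hy.2).le
    have hrstar0 : 0 < rstar := lt_of_lt_of_le hδ2 hrstar_ge
    -- the local solution through (rstar, pstar) at time tstar
    set v : ℝ × ℝ → ℝ × ℝ := fun x => (x.2, c ^ 2 / x.1 ^ 3 - 1 / x.1) with hv
    have hvd : ContDiffAt ℝ 1 v (rstar, pstar) := by
      apply ContDiffAt.prodMk
      · exact contDiff_snd.contDiffAt
      · have hne : ((rstar, pstar) : ℝ × ℝ).1 ^ 3 ≠ 0 := pow_ne_zero 3 hrstar0.ne'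
        have h1 : ContDiffAt ℝ 1 (fun x : ℝ × ℝ => c ^ 2 / x.1 ^ 3) (rstar, pstar) :=
          ContDiffAt.div contDiffAt_const ((contDiff_fst.pow 3).contDiffAt) hne
        have h2 : ContDiffAt ℝ 1 (fun x : ℝ × ℝ => 1 / x.1) (rstar, pstar) :=
          ContDiffAt.div contDiffAt_const contDiff_fst.contDiffAt hrstar0.ne'
        exact h1.sub h2
    obtain ⟨f, hf0, ε₀, hε₀, hf⟩ := hvd.exists_forall_mem_closedBall_exists_eq_forall_mem_Ioo_hasDerivAt₀ tstar
    have htsmem : tstar ∈ Ioo (tstar - ε₀) (tstar + ε₀) := ⟨by linarith, by linarith⟩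
    -- component derivatives of f
    have hf1 : ∀ t ∈ Ioo (tstar - ε₀) (tstar + ε₀),
        HasDerivAt (fun s => (f s).1) ((f t).2) t := by
      intro t htm
      have := (ContinuousLinearMap.fst ℝ ℝ ℝ).hasFDerivAt.comp_hasDerivAt t (hf t htm)
      simp [hv] at this
      exact this
    have hf2 : ∀ t ∈ Ioo (tstar - ε₀) (tstar + ε₀),
        HasDerivAt (fun s => (f s).2) (c ^ 2 / (f t).1 ^ 3 - 1 / (f t).1) t := by
      intro t htm
      have := (ContinuousLinearMap.snd ℝ ℝ ℝ).hasFDerivAt.comp_hasDerivAt t (hf t htm)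
      simp [hv] at this
      rw [one_div]
      exact this
    -- positivity of the first component near tstar
    have hcf1 : ContinuousAt (fun s => (f s).1) tstar := (hf1 tstar htsmem).continuousAt
    have hevpos : ∀ᶠ s in nhds tstar, rstar / 2 < (f s).1 := by
      apply hcf1.eventually
      have : rstar / 2 < (f tstar).1 := by rw [hf0]; linarith
      exact eventually_gt_nhds this
    obtain ⟨ε₁, hε₁, hball⟩ := Metric.eventually_nhds_iff.mp hevpos
    set ε := min ε₀ ε₁ / 2 with hεdef
    have hε : 0 < ε := by rw [hεdef]; positivity
    have hεε₀ : ε < ε₀ := by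
      have := min_le_left ε₀ ε₁; rw [hεdef]; linarith
    have hεε₁ : ε < ε₁ := by
      have := min_le_right ε₀ ε₁; rw [hεdef]; linarith
    clear_value ε
    -- the glued extension
    set R' : ℝ → ℝ := fun t => if t < tstar then r t else (f t).1 with hR'
    set P' : ℝ → ℝ := fun t => if t < tstar then p t else (f t).2 with hP'
    have hR'eq : ∀ t, t < tstar → R' t = r t := fun t ht => if_pos ht
    have hP'eq : ∀ t, t < tstar → P' t = p t := fun t ht => if_pos ht
    have hR'eq' : ∀ t, tstar ≤ t → R' t = (f t).1 := fun t ht => if_neg (not_lt.mpr ht)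
    have hP'eq' : ∀ t, tstar ≤ t → P' t = (f t).2 := fun t ht => if_neg (not_lt.mpr ht)
    have hR't : R' tstar = rstar := by rw [hR'eq' tstar le_rfl, hf0]
    have hP't : P' tstar = pstar := by rw [hP'eq' tstar le_rfl, hf0]
    -- derivatives of the glued functions away from tstar
    have hR'd : ∀ s, 0 ≤ s → s < tstar → HasDerivAt R' (p s) s := by
      intro s h0 h1
      refine (hrd s ⟨h0, h1⟩).congr_of_eventuallyEq ?_
      exact eventually_of_mem (IsOpen.mem_nhds isOpen_Iio h1) fun y hy => hR'eq y hy
    have hP'd : ∀ s, 0 ≤ s → s < tstar →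
        HasDerivAt P' (c ^ 2 / (r s) ^ 3 - 1 / r s) s := by
      intro s h0 h1
      refine (hpd s ⟨h0, h1⟩).congr_of_eventuallyEq ?_
      exact eventually_of_mem (IsOpen.mem_nhds isOpen_Iio h1) fun y hy => hP'eq y hy
    apply hmax
    refine ⟨R', P', ε, hε, fun t ht => ⟨hR'eq t ht.2, hP'eq t ht.2⟩, ?_⟩
    intro t ht
    rcases lt_trichotomy t tstar with hlt | heq | hgt
    · have htm : t ∈ Ico (0:ℝ) tstar := ⟨ht.1, hlt⟩
      refine ⟨by rw [hR'eq t hlt]; exact hrpos t htm, ?_, ?_⟩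
      · rw [hP'eq t hlt]; exact hR'd t ht.1 hlt
      · rw [hR'eq t hlt]; exact hP'd t ht.1 hlt
    · subst heq
      refine ⟨by rw [hR't]; exact hrstar0, ?_, ?_⟩
      · -- derivative of R' at tstar
        rw [hP't]
        have hleft : HasDerivWithinAt R' pstar (Iic t) t := by
          refine hasDerivWithinAt_Iic_of_tendsto ht₁lt
            (fun s hs => hR'd s (le_trans ht₁0.le hs.1.le) hs.2) ?_ hpstar
          exact continuousWithinAt_Iic_glue hR'eq hR't hrstar
        have hright : HasDerivWithinAt R' pstar (Ici t) t := by
          have h1 := (hf1 t htsmem).hasDerivWithinAt (s := Ici t)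
          rw [hf0] at h1
          exact h1.congr (fun y hy => hR'eq' y hy) (hR'eq' t le_rfl)
        have := hleft.union hright
        rw [Iic_union_Ici, hasDerivWithinAt_univ] at this
        exact this
      · -- derivative of P' at tstar
        rw [hR't]
        have hGq : Tendsto (fun s => c ^ 2 / (r s) ^ 3 - 1 / r s)
            (nhdsWithin t (Iio t)) (nhds (c ^ 2 / rstar ^ 3 - 1 / rstar)) := by
          have h1 : Tendsto (fun s => c ^ 2 / (r s) ^ 3) (nhdsWithin t (Iio t))
              (nhds (c ^ 2 / rstar ^ 3)) :=
            tendsto_const_nhds.div (hrstar.pow 3) (pow_ne_zero 3 hrstar0.ne')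
          have h2 : Tendsto (fun s => 1 / r s) (nhdsWithin t (Iio t))
              (nhds (1 / rstar)) := tendsto_const_nhds.div hrstar hrstar0.ne'
          exact h1.sub h2
        have hleft : HasDerivWithinAt P' (c ^ 2 / rstar ^ 3 - 1 / rstar) (Iic t) t := by
          refine hasDerivWithinAt_Iic_of_tendsto ht₁lt
            (fun s hs => hP'd s (le_trans ht₁0.le hs.1.le) hs.2) ?_ hGq
          exact continuousWithinAt_Iic_glue hP'eq hP't hpstar
        have hright : HasDerivWithinAt P' (c ^ 2 / rstar ^ 3 - 1 / rstar) (Ici t) t := by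
          have h1 := (hf2 t htsmem).hasDerivWithinAt (s := Ici t)
          rw [hf0] at h1
          exact h1.congr (fun y hy => hP'eq' y hy) (hP'eq' t le_rfl)
        have := hleft.union hright
        rw [Iic_union_Ici, hasDerivWithinAt_univ] at this
        exact this
    · -- t > tstar
      have ht2 : t < tstar + ε := ht.2
      have htm : t ∈ Ioo (tstar - ε₀) (tstar + ε₀) := ⟨by linarith, by linarith⟩
      have hdist : dist t tstar < ε₁ := by
        rw [Real.dist_eq, abs_of_pos (by linarith : (0:ℝ) < t - tstar)]
        linarith
      have hfe1 : R' =ᶠ[nhds t] fun s => (f s).1 :=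
        eventually_of_mem (IsOpen.mem_nhds isOpen_Ioi hgt)
          fun s hs => hR'eq' s (le_of_lt hs)
      have hfe2 : P' =ᶠ[nhds t] fun s => (f s).2 :=
        eventually_of_mem (IsOpen.mem_nhds isOpen_Ioi hgt)
          fun s hs => hP'eq' s (le_of_lt hs)
      refine ⟨?_, ?_, ?_⟩
      · rw [hR'eq' t hgt.le]
        have := hball hdist
        linarith
      · have := (hf1 t htm).congr_of_eventuallyEq hfe1
        rw [hP'eq' t hgt.le]
        exact this
      · have := (hf2 t htm).congr_of_eventuallyEq hfe2
        rw [hR'eq' t hgt.le]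
        exact this
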